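/- Let F and G be cumulative distribution functions on ℝ whose corresponding distributions are supported in an interval of length c ≥ 0, and let r ≥ 1. Then ∫₀¹ |F⁻¹(p) − G⁻¹(p)|^r dp ≤ c^{r−1} ∫_ℝ |F(t) − G(t)| dt, i.e., W_r(P,Q)^r ≤ c^{r−1} W₁(P,Q) for the one-dimensional Wasserstein distances. -/

import Mathlib

open MeasureTheory ProbabilityTheory

noncomputable section

/-- The generalized inverse (quantile function) of the cdf of a measure on ℝ. -/
def quantile (P : Measure ℝ) (p : ℝ) : ℝ :=
  sInf {x : ℝ | p ≤ cdf P x}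

section Aux

variable {P : Measure ℝ} [IsProbabilityMeasure P] {a c : ℝ}

lemma aux_cdf_one (hc : 0 ≤ c) (hP : P (Set.Icc a (a + c)) = 1) : cdf P (a + c) = 1 := by
  have h1 : P (Set.Iic (a + c)) = 1 := by
    refine le_antisymm prob_le_one ?_
    rw [← hP]
    exact measure_mono (Set.Icc_subset_Iic_self)
  rw [cdf_eq_real, measureReal_def, h1, ENNReal.toReal_one]

lemma aux_cdf_zero (hP : P (Set.Icc a (a + c)) = 1) {x : ℝ} (hx : x < a) : cdf P x = 0 := by
  have hcompl : P (Set.Icc a (a + c))ᶜ = 0 := by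
    rw [measure_compl measurableSet_Icc (measure_ne_top _ _), hP, measure_univ, tsub_self]
  have h0 : P (Set.Iic x) = 0 := by
    refine measure_mono_null ?_ hcompl
    intro t ht
    simp only [Set.mem_Iic] at ht
    simp only [Set.mem_compl_iff, Set.mem_Icc, not_and, not_le]
    intro h; linarith
  rw [cdf_eq_real, measureReal_def, h0, ENNReal.toReal_zero]

lemma aux_nonempty (hc : 0 ≤ c) (hP : P (Set.Icc a (a + c)) = 1) {p : ℝ} (hp1 : p ≤ 1) :
    (a + c) ∈ {x : ℝ | p ≤ cdf P x} := by
  simp only [Set.mem_setOf_eq, aux_cdf_one hc hP]; exact hp1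

lemma aux_bddBelow (hP : P (Set.Icc a (a + c)) = 1) {p : ℝ} (hp0 : 0 < p) :
    a ∈ lowerBounds {x : ℝ | p ≤ cdf P x} := by
  intro x hx
  by_contra h
  push_neg at h
  rw [Set.mem_setOf_eq, aux_cdf_zero hP h] at hx
  linarith

lemma aux_quantile_mem (hc : 0 ≤ c) (hP : P (Set.Icc a (a + c)) = 1) {p : ℝ}
    (hp0 : 0 < p) (hp1 : p ≤ 1) : p ≤ cdf P (quantile P p) := by
  set S := {x : ℝ | p ≤ cdf P x} with hS
  have hne : S.Nonempty := ⟨a + c, aux_nonempty hc hP hp1⟩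
  have hbdd : BddBelow S := ⟨a, aux_bddBelow hP hp0⟩
  by_contra h
  push_neg at h
  have hrc : ContinuousWithinAt (cdf P) (Set.Ici (sInf S)) (sInf S) :=
    (cdf P).right_continuous (sInf S)
  have hev : ∀ᶠ y in nhdsWithin (sInf S) (Set.Ici (sInf S)), cdf P y < p :=
    hrc.eventually_lt continuousWithinAt_const h
  rw [eventually_nhdsWithin_iff, Metric.eventually_nhds_iff] at hev
  obtain ⟨ε, hε, hball⟩ := hev
  have hlb : sInf S + ε / 2 ∈ lowerBounds S := by
    intro z hz
    by_contra hzlt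
    push_neg at hzlt
    have hz1 : sInf S ≤ z := csInf_le hbdd hz
    have : cdf P z < p := hball (by rw [Real.dist_eq, abs_of_nonneg (by linarith)]; linarith) hz1
    exact absurd hz (by simp only [hS, Set.mem_setOf_eq]; push_neg; exact this)
  have := le_csInf hne hlb
  linarith

lemma aux_quantile_le_iff (hc : 0 ≤ c) (hP : P (Set.Icc a (a + c)) = 1) {p t : ℝ}
    (hp0 : 0 < p) (hp1 : p ≤ 1) : quantile P p ≤ t ↔ p ≤ cdf P t := by
  constructor
  · intro h
    exact le_trans (aux_quantile_mem hc hP hp0 hp1) (monotone_cdf P h)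
  · intro h
    exact csInf_le ⟨a, aux_bddBelow hP hp0⟩ h

lemma aux_quantile_mem_Icc (hc : 0 ≤ c) (hP : P (Set.Icc a (a + c)) = 1) {p : ℝ}
    (hp0 : 0 < p) (hp1 : p ≤ 1) : quantile P p ∈ Set.Icc a (a + c) := by
  constructor
  · exact le_csInf ⟨a + c, aux_nonempty hc hP hp1⟩ (aux_bddBelow hP hp0)
  · exact csInf_le ⟨a, aux_bddBelow hP hp0⟩ (aux_nonempty hc hP hp1)

/-- volume of symmetric difference of Ici's. -/
lemma aux_vol_Ici (x y : ℝ) :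
    volume ((Set.Ici x \ Set.Ici y) ∪ (Set.Ici y \ Set.Ici x)) = ENNReal.ofReal |x - y| := by
  rcases le_total x y with h | h
  · have h1 : Set.Ici y \ Set.Ici x = ∅ := Set.diff_eq_empty.mpr (Set.Ici_subset_Ici.mpr h)
    rw [h1, Set.union_empty, Set.Ici_diff_Ici, Real.volume_Ico, abs_sub_comm,
      abs_of_nonneg (by linarith)]
  · have h1 : Set.Ici x \ Set.Ici y = ∅ := Set.diff_eq_empty.mpr (Set.Ici_subset_Ici.mpr h)
    rw [h1, Set.empty_union, Set.Ici_diff_Ici, Real.volume_Ico, abs_of_nonneg (by linarith)]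

/-- volume of intersection of the symmetric difference of Iic's with (0,1). -/
lemma aux_vol_Iic {u v : ℝ} (hu : 0 ≤ u) (hv : 0 ≤ v) (hu1 : u ≤ 1) (hv1 : v ≤ 1) :
    volume (Set.Ioo (0:ℝ) 1 ∩ ((Set.Iic u \ Set.Iic v) ∪ (Set.Iic v \ Set.Iic u)))
      = ENNReal.ofReal |u - v| := by
  have key : ∀ w z : ℝ, 0 ≤ w → w ≤ z → z ≤ 1 →
      volume (Set.Ioo (0:ℝ) 1 ∩ Set.Ioc w z) = ENNReal.ofReal (z - w) := by
    intro w z hw hwz hz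
    refine le_antisymm ?_ ?_
    · calc volume (Set.Ioo (0:ℝ) 1 ∩ Set.Ioc w z) ≤ volume (Set.Ioc w z) :=
            measure_mono Set.inter_subset_right
        _ = ENNReal.ofReal (z - w) := Real.volume_Ioc
    · calc ENNReal.ofReal (z - w) = volume (Set.Ioo w z) := Real.volume_Ioo.symm
        _ ≤ volume (Set.Ioo (0:ℝ) 1 ∩ Set.Ioc w z) := by
            refine measure_mono fun x hx => ?_
            simp only [Set.mem_Ioo] at hx
            exact ⟨⟨by linarith [hx.1], by linarith [hx.2]⟩, ⟨hx.1, le_of_lt hx.2⟩⟩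
  rcases le_total u v with h | h
  · have h1 : Set.Iic u \ Set.Iic v = ∅ := Set.diff_eq_empty.mpr (Set.Iic_subset_Iic.mpr h)
    rw [h1, Set.empty_union, Set.diff_eq, Set.compl_Iic, Set.inter_comm (Set.Iic _), Set.Ioi_inter_Iic, key u v hu h hv1, abs_sub_comm,
      abs_of_nonneg (by linarith)]
  · have h1 : Set.Iic v \ Set.Iic u = ∅ := Set.diff_eq_empty.mpr (Set.Iic_subset_Iic.mpr h)
    rw [h1, Set.union_empty, Set.diff_eq, Set.compl_Iic, Set.inter_comm (Set.Iic _), Set.Ioi_inter_Iic, key v u hv h hu1, abs_of_nonneg (by linarith)]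

end Aux

/-- for distributions supported in a common interval of length c,
W_r(P,Q)^r = ∫₀¹ |F⁻¹ − G⁻¹|^r ≤ c^{r−1} ∫ |F − G| = c^{r−1} W₁(P,Q). -/
theorem quantile_Wr_le_W1 (P Q : Measure ℝ)
    [IsProbabilityMeasure P] [IsProbabilityMeasure Q]
    (r c a : ℝ) (hr : 1 ≤ r) (hc : 0 ≤ c)
    (hP : P (Set.Icc a (a + c)) = 1) (hQ : Q (Set.Icc a (a + c)) = 1) :
    (∫ p in Set.Ioo (0 : ℝ) 1, |quantile P p - quantile Q p| ^ r)
      ≤ c ^ (r - 1) * ∫ t : ℝ, |cdf P t - cdf Q t| := by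
  -- notation
  set F : ℝ → ℝ := fun t => cdf P t with hF
  set G : ℝ → ℝ := fun t => cdf Q t with hG
  have hFmeas : Measurable F := (monotone_cdf P).measurable
  have hGmeas : Measurable G := (monotone_cdf Q).measurable
  set SP : Set (ℝ × ℝ) := {z | z.1 ≤ F z.2} with hSP
  set SQ : Set (ℝ × ℝ) := {z | z.1 ≤ G z.2} with hSQ
  have hSPm : MeasurableSet SP := measurableSet_le measurable_fst (hFmeas.comp measurable_snd)
  have hSQm : MeasurableSet SQ := measurableSet_le measurable_fst (hGmeas.comp measurable_snd)
  set A : Set (ℝ × ℝ) := (SP \ SQ) ∪ (SQ \ SP) with hA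
  have hAm : MeasurableSet A := (hSPm.diff hSQm).union (hSQm.diff hSPm)
  set g : ℝ → ℝ := fun p => |quantile P p - quantile Q p| with hg
  -- slice in p
  have slice_p : ∀ p ∈ Set.Ioo (0:ℝ) 1,
      volume (Prod.mk p ⁻¹' A) = ENNReal.ofReal (g p) := by
    intro p hp
    obtain ⟨hp0, hp1⟩ := hp
    have hPset : {t : ℝ | p ≤ F t} = Set.Ici (quantile P p) := by
      ext t
      simp only [Set.mem_setOf_eq, Set.mem_Ici]
      exact (aux_quantile_le_iff hc hP hp0 hp1.le).symm
    have hQset : {t : ℝ | p ≤ G t} = Set.Ici (quantile Q p) := by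
      ext t
      simp only [Set.mem_setOf_eq, Set.mem_Ici]
      exact (aux_quantile_le_iff hc hQ hp0 hp1.le).symm
    have : Prod.mk p ⁻¹' A =
        (Set.Ici (quantile P p) \ Set.Ici (quantile Q p)) ∪
          (Set.Ici (quantile Q p) \ Set.Ici (quantile P p)) := by
      rw [← hPset, ← hQset]
      rfl
    rw [this, aux_vol_Ici]
  -- slice in t
  have slice_t : ∀ t : ℝ,
      volume.restrict (Set.Ioo (0:ℝ) 1) ((fun p => (p, t)) ⁻¹' A)
        = ENNReal.ofReal (|F t - G t|) := by
    intro t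
    have hpre : (fun p : ℝ => (p, t)) ⁻¹' A =
        (Set.Iic (F t) \ Set.Iic (G t)) ∪ (Set.Iic (G t) \ Set.Iic (F t)) := by
      ext p
      simp only [hA, hSP, hSQ, Set.mem_preimage, Set.mem_union, Set.mem_diff,
        Set.mem_setOf_eq, Set.mem_Iic]
    have hprem : MeasurableSet ((fun p : ℝ => (p, t)) ⁻¹' A) := by
      rw [hpre]
      exact (measurableSet_Iic.diff measurableSet_Iic).union
        (measurableSet_Iic.diff measurableSet_Iic)
    rw [Measure.restrict_apply hprem, hpre, Set.inter_comm]
    exact aux_vol_Iic (cdf_nonneg P t) (cdf_nonneg Q t) (cdf_le_one P t) (cdf_le_one Q t)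
  -- Fubini: key identity
  have key : (∫⁻ p in Set.Ioo (0:ℝ) 1, ENNReal.ofReal (g p))
      = ∫⁻ t : ℝ, ENNReal.ofReal (|F t - G t|) := by
    have h1 : (∫⁻ p in Set.Ioo (0:ℝ) 1, ENNReal.ofReal (g p))
        = ((volume.restrict (Set.Ioo (0:ℝ) 1)).prod volume) A := by
      rw [Measure.prod_apply hAm]
      exact (setLIntegral_congr_fun measurableSet_Ioo
        (fun p hp => (slice_p p hp).symm))
    have h2 : ((volume.restrict (Set.Ioo (0:ℝ) 1)).prod volume) A
        = ∫⁻ t : ℝ, ENNReal.ofReal (|F t - G t|) := by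
      rw [Measure.prod_apply_symm hAm]
      exact lintegral_congr slice_t
    rw [h1, h2]
  -- boundedness of g on (0,1)
  have hgc : ∀ p ∈ Set.Ioo (0:ℝ) 1, g p ≤ c := by
    intro p hp
    obtain ⟨hP1, hP2⟩ := aux_quantile_mem_Icc hc hP hp.1 hp.2.le
    obtain ⟨hQ1, hQ2⟩ := aux_quantile_mem_Icc hc hQ hp.1 hp.2.le
    rw [hg, abs_le]
    constructor <;> linarith
  have hg0 : ∀ p, 0 ≤ g p := fun p => abs_nonneg _
  -- ae-measurability of g on (0,1)
  have hm : Measurable (fun p => volume (Prod.mk p ⁻¹' A)) :=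
    measurable_measure_prodMk_left hAm
  have hgae : g =ᵐ[volume.restrict (Set.Ioo (0:ℝ) 1)]
      (fun p => (volume (Prod.mk p ⁻¹' A)).toReal) := by
    filter_upwards [self_mem_ae_restrict measurableSet_Ioo] with p hp
    rw [slice_p p hp, ENNReal.toReal_ofReal (hg0 p)]
  have hgaem : AEMeasurable g (volume.restrict (Set.Ioo (0:ℝ) 1)) :=
    (hm.ennreal_toReal.aemeasurable).congr hgae.symm
  -- finiteness
  have hLfin : (∫⁻ p in Set.Ioo (0:ℝ) 1, ENNReal.ofReal (g p)) ≤ ENNReal.ofReal c := by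
    calc (∫⁻ p in Set.Ioo (0:ℝ) 1, ENNReal.ofReal (g p))
        ≤ ∫⁻ _ in Set.Ioo (0:ℝ) 1, ENNReal.ofReal c := by
          refine setLIntegral_mono_ae (by fun_prop)
            (Filter.Eventually.of_forall fun p hp => ENNReal.ofReal_le_ofReal (hgc p hp))
      _ = ENNReal.ofReal c * volume (Set.Ioo (0:ℝ) 1) := by
          rw [setLIntegral_const]
      _ ≤ ENNReal.ofReal c := by
          rw [Real.volume_Ioo]
          simp
  have hLne : (∫⁻ p in Set.Ioo (0:ℝ) 1, ENNReal.ofReal (g p)) ≠ ⊤ :=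
    (lt_of_le_of_lt hLfin ENNReal.ofReal_lt_top).ne
  -- pointwise bound g^r ≤ c^(r-1) * g
  have hpt : ∀ p ∈ Set.Ioo (0:ℝ) 1, g p ^ r ≤ c ^ (r - 1) * g p := by
    intro p hp
    rcases eq_or_lt_of_le (hg0 p) with h0 | h0
    · rw [← h0, Real.zero_rpow (by linarith), mul_zero]
    · have hsplit : g p ^ r = g p ^ (r - 1) * g p := by
        calc g p ^ r = g p ^ (r - 1 + 1) := by norm_num
          _ = g p ^ (r - 1) * g p ^ (1:ℝ) := Real.rpow_add h0 _ _
          _ = g p ^ (r - 1) * g p := by rw [Real.rpow_one]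
      rw [hsplit]
      exact mul_le_mul_of_nonneg_right
        (Real.rpow_le_rpow (hg0 p) (hgc p hp) (by linarith)) (hg0 p)
  -- express LHS integral via lintegral
  have hLHS : (∫ p in Set.Ioo (0:ℝ) 1, g p ^ r)
      = (∫⁻ p in Set.Ioo (0:ℝ) 1, ENNReal.ofReal (g p ^ r)).toReal := by
    rw [integral_eq_lintegral_of_nonneg_ae
      (Filter.Eventually.of_forall fun p => Real.rpow_nonneg (hg0 p) r)
      (((Real.continuous_rpow_const (by linarith : (0:ℝ) ≤ r)).measurable.comp_aemeasurable
        hgaem).aestronglyMeasurable)]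
  -- express RHS integral via lintegral
  have hRHS : (∫ t : ℝ, |F t - G t|)
      = (∫⁻ t : ℝ, ENNReal.ofReal (|F t - G t|)).toReal := by
    rw [integral_eq_lintegral_of_nonneg_ae (f := fun t => |F t - G t|)
      (Filter.Eventually.of_forall fun t => abs_nonneg _)
      ((hFmeas.sub hGmeas).abs.aestronglyMeasurable)]
  have hcr : (0:ℝ) ≤ c ^ (r - 1) := Real.rpow_nonneg hc _
  -- main chain
  rw [hLHS, hRHS]
  have step1 : (∫⁻ p in Set.Ioo (0:ℝ) 1, ENNReal.ofReal (g p ^ r))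
      ≤ ENNReal.ofReal (c ^ (r - 1)) * ∫⁻ p in Set.Ioo (0:ℝ) 1, ENNReal.ofReal (g p) := by
    rw [← lintegral_const_mul'' _ hgaem.ennreal_ofReal]
    · refine setLIntegral_mono_ae ?_ (Filter.Eventually.of_forall fun p hp => ?_)
      · fun_prop
      · rw [← ENNReal.ofReal_mul hcr]
        exact ENNReal.ofReal_le_ofReal (hpt p hp)
  have hfin2 : ENNReal.ofReal (c ^ (r - 1)) * (∫⁻ p in Set.Ioo (0:ℝ) 1, ENNReal.ofReal (g p))
      ≠ ⊤ := ENNReal.mul_ne_top ENNReal.ofReal_ne_top hLne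
  calc (∫⁻ p in Set.Ioo (0:ℝ) 1, ENNReal.ofReal (g p ^ r)).toReal
      ≤ (ENNReal.ofReal (c ^ (r - 1)) *
          ∫⁻ p in Set.Ioo (0:ℝ) 1, ENNReal.ofReal (g p)).toReal :=
        ENNReal.toReal_mono hfin2 step1
    _ = c ^ (r - 1) * (∫⁻ t : ℝ, ENNReal.ofReal (|F t - G t|)).toReal := by
        rw [← key, ENNReal.toReal_mul, ENNReal.toReal_ofReal hcr]
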